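/- The quotient ring A = k[s,x,y,z]/(y(x−s), xz, yz) has no s-torsion: if φ ∈ k[s,x,y,z] satisfies s·φ ∈ (y(x−s), xz, yz), then φ ∈ (y(x−s), xz, yz). Consequently A is flat as a k[s]-module. -/

import Mathlib

open MvPolynomial

noncomputable section

variable (k : Type*) [Field k]

/-- The ideal `(y(x−s), xz, yz)` of `k[s,x,y,z]`
(with `s = X 0`, `x = X 1`, `y = X 2`, `z = X 3`). -/
def threePlanesIdeal : Ideal (MvPolynomial (Fin 4) k) :=
  Ideal.span {X 2 * (X 1 - X 0), X 1 * X 3, X 2 * X 3}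

/-- The coordinate ring `A = k[s,x,y,z]/(y(x−s), xz, yz)` of the union of
the three 2-planes `{x=y=0}`, `{y=z=0}`, `{x−s=z=0}`. -/
abbrev threePlanesRing := MvPolynomial (Fin 4) k ⧸ threePlanesIdeal k

/-- general lemma: P - aeval f P lies in the span of the `X i - f i`. -/
lemma sub_aeval_mem (f : Fin 4 → MvPolynomial (Fin 4) k) (P : MvPolynomial (Fin 4) k) :
    P - aeval f P ∈ Ideal.span (Set.range fun i => (X i : MvPolynomial (Fin 4) k) - f i) := by
  induction P using MvPolynomial.induction_on with
  | C a => simp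
  | add P Q hP hQ =>
      have : P + Q - aeval f (P + Q) = (P - aeval f P) + (Q - aeval f Q) := by
        rw [map_add]; ring
      rw [this]; exact Ideal.add_mem _ hP hQ
  | mul_X P i hP =>
      have : P * X i - aeval f (P * X i) =
          (P - aeval f P) * X i + aeval f P * (X i - f i) := by
        rw [map_mul, aeval_X]; ring
      rw [this]
      exact Ideal.add_mem _ (Ideal.mul_mem_right _ _ hP)
        (Ideal.mul_mem_left _ _ (Ideal.subset_span ⟨i, rfl⟩))

end
noncomputable section
variable (k : Type*) [Field k]

abbrev R4 := MvPolynomial (Fin 4) k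

def te1 : R4 k →ₐ[k] R4 k := aeval ![X 0, 0, 0, X 3]
def te2 : R4 k →ₐ[k] R4 k := aeval ![X 0, X 1, 0, 0]
def te3 : R4 k →ₐ[k] R4 k := aeval ![X 0, X 0, X 2, 0]

lemma te1_ker {φ : R4 k} (h : te1 k φ = 0) :
    φ ∈ Ideal.span {(X 1 : R4 k), X 2} := by
  have h2 := sub_aeval_mem k ![X 0, 0, 0, X 3] φ
  rw [show aeval ![X 0, 0, 0, X 3] φ = te1 k φ from rfl, h, sub_zero] at h2
  refine Ideal.span_le.mpr ?_ h2
  rintro _ ⟨i, rfl⟩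
  fin_cases i <;> simp <;> exact Ideal.subset_span (by simp)
lemma te2_ker {φ : R4 k} (h : te2 k φ = 0) :
    φ ∈ Ideal.span {(X 2 : R4 k), X 3} := by
  have h2 := sub_aeval_mem k ![X 0, X 1, 0, 0] φ
  rw [show aeval ![X 0, X 1, 0, 0] φ = te2 k φ from rfl, h, sub_zero] at h2
  refine Ideal.span_le.mpr ?_ h2
  rintro _ ⟨i, rfl⟩
  fin_cases i <;> simp <;> exact Ideal.subset_span (by simp)

lemma te3_ker {φ : R4 k} (h : te3 k φ = 0) :
    φ ∈ Ideal.span {(X 1 : R4 k) - X 0, X 3} := by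
  have h2 := sub_aeval_mem k ![X 0, X 0, X 2, 0] φ
  rw [show aeval ![X 0, X 0, X 2, 0] φ = te3 k φ from rfl, h, sub_zero] at h2
  refine Ideal.span_le.mpr ?_ h2
  rintro _ ⟨i, rfl⟩
  fin_cases i <;> simp <;> exact Ideal.subset_span (by simp)
def tpI : Ideal (R4 k) := Ideal.span {X 2 * (X 1 - X 0), X 1 * X 3, X 2 * X 3}

lemma mem_of_evals {φ : R4 k} (h1 : te1 k φ = 0) (h2 : te2 k φ = 0) (h3 : te3 k φ = 0) :
    φ ∈ tpI k := by
  obtain ⟨a, b, hab⟩ := Ideal.mem_span_pair.mp (te3_ker k h3)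
  -- e2 applied
  have e2eq : te2 k a * (X 1 - X 0) = 0 := by
    have := congrArg (te2 k) hab
    rw [h2, map_add, map_mul, map_mul, map_sub] at this
    simpa [te2] using this
  have ha2 : te2 k a = 0 := by
    rcases mul_eq_zero.mp e2eq with h | h
    · exact h
    · exact absurd h (sub_ne_zero_of_ne (fun he => by simpa using X_injective he))
  obtain ⟨u, v, huv⟩ := Ideal.mem_span_pair.mp (te2_ker k ha2)
  set w : R4 k := v * (X 1 - X 0) + b with hw
  have hφ : φ = u * (X 2 * (X 1 - X 0)) + X 3 * w := by
    rw [hw, ← hab, ← huv]; ring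
  have e1eq : (X 3 : R4 k) * te1 k w = 0 := by
    have := congrArg (te1 k) hφ
    rw [h1, map_add, map_mul, map_mul, map_mul, map_sub] at this
    simpa [te1] using this
  have hw1 : te1 k w = 0 := by
    rcases mul_eq_zero.mp e1eq with h | h
    · exact absurd h (X_ne_zero 3)
    · exact h
  obtain ⟨c, d, hcd⟩ := Ideal.mem_span_pair.mp (te1_ker k hw1)
  have : φ = u * (X 2 * (X 1 - X 0)) + c * (X 1 * X 3) + d * (X 2 * X 3) := by
    rw [hφ, ← hcd]; ring
  rw [this]
  refine Ideal.add_mem _ (Ideal.add_mem _ ?_ ?_) ?_ <;>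
    exact Ideal.mul_mem_left _ _ (Ideal.subset_span (by simp))
lemma ker_helper (f : R4 k →ₐ[k] R4 k)
    (hf : ∀ g ∈ ({X 2 * (X 1 - X 0), X 1 * X 3, X 2 * X 3} : Set (R4 k)), f g = 0)
    {φ : R4 k} (h : φ ∈ tpI k) : f φ = 0 := by
  have hle : tpI k ≤ RingHom.ker f.toRingHom := by
    rw [tpI, Ideal.span_le]
    intro g hg
    simpa [RingHom.mem_ker] using hf g hg
  simpa using RingHom.mem_ker.mp (hle h)

lemma evals_of_mem {φ : R4 k} (h : φ ∈ tpI k) :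
    te1 k φ = 0 ∧ te2 k φ = 0 ∧ te3 k φ = 0 := by
  refine ⟨ker_helper k _ ?_ h, ker_helper k _ ?_ h, ker_helper k _ ?_ h⟩ <;>
  · rintro g hg
    simp only [Set.mem_insert_iff, Set.mem_singleton_iff] at hg
    rcases hg with rfl | rfl | rfl <;> simp [te1, te2, te3]

lemma te_fix (p : Polynomial k) :
    te1 k (Polynomial.aeval (X 0 : R4 k) p) = Polynomial.aeval (X 0 : R4 k) p ∧
    te2 k (Polynomial.aeval (X 0 : R4 k) p) = Polynomial.aeval (X 0 : R4 k) p ∧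
    te3 k (Polynomial.aeval (X 0 : R4 k) p) = Polynomial.aeval (X 0 : R4 k) p := by
  refine ⟨?_, ?_, ?_⟩ <;>
  · rw [← Polynomial.aeval_algHom_apply]
    simp [te1, te2, te3]

lemma aevalX0_ne_zero {p : Polynomial k} (hp : p ≠ 0) :
    Polynomial.aeval (X 0 : R4 k) p ≠ 0 := by
  intro h
  apply hp
  have := congrArg (MvPolynomial.aeval (fun i : Fin 4 => if i = 0 then (Polynomial.X : Polynomial k) else 0)) h
  rwa [← Polynomial.aeval_algHom_apply, aeval_X, if_pos rfl, Polynomial.aeval_X_left_apply, map_zero] at this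

lemma tpI_regular (p : Polynomial k) (hp : p ≠ 0) (φ : R4 k)
    (h : Polynomial.aeval (X 0 : R4 k) p * φ ∈ tpI k) : φ ∈ tpI k := by
  set P := Polynomial.aeval (X 0 : R4 k) p with hP
  obtain ⟨f1, f2, f3⟩ := evals_of_mem k h
  obtain ⟨g1, g2, g3⟩ := te_fix k p
  rw [map_mul, g1] at f1
  rw [map_mul, g2] at f2
  rw [map_mul, g3] at f3
  have hP0 := aevalX0_ne_zero k hp
  exact mem_of_evals k
    ((mul_eq_zero.mp f1).resolve_left hP0)
    ((mul_eq_zero.mp f2).resolve_left hP0)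
    ((mul_eq_zero.mp f3).resolve_left hP0)
open TensorProduct in
lemma flat_of_torsionfree {R M : Type*} [CommRing R] [IsDomain R] [IsPrincipalIdealRing R]
    [AddCommGroup M] [Module R M]
    (hM : ∀ (p : R) (m : M), p • m = 0 → p = 0 ∨ m = 0) : Module.Flat R M := by
  rw [Module.Flat.iff_rTensor_injective']
  intro I
  obtain ⟨p, hp⟩ : I.IsPrincipal := IsPrincipalIdealRing.principal I
  by_cases hp0 : p = 0
  · have hI : I = ⊥ := by rw [hp, hp0]; simp
    subst hI
    have hsub : ∀ t : (⊥ : Ideal R) ⊗[R] M, t = 0 := by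
      intro t
      induction t with
      | zero => rfl
      | add x y hx hy => rw [hx, hy, add_zero]
      | tmul x m =>
          have : x = 0 := Subtype.ext ((Submodule.mem_bot R).mp x.2)
          rw [this, TensorProduct.zero_tmul]
    intro a b _
    rw [hsub a, hsub b]
  · have hIeq : I = (Submodule.span R {p} : Submodule R R) := by rw [hp]
    subst hIeq
    set e := LinearEquiv.toSpanNonzeroSingleton R R p hp0 with he
    have hre : ∀ t, (LinearMap.rTensor M (e : R →ₗ[R] (R ∙ p)))
        ((LinearMap.rTensor M (e.symm : (R ∙ p) →ₗ[R] R)) t) = t := by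
      intro t
      rw [← LinearMap.rTensor_comp_apply]
      have h2 : (e : R →ₗ[R] (R ∙ p)) ∘ₗ (e.symm : (R ∙ p) →ₗ[R] R) = LinearMap.id := by
        ext x; simp
      rw [h2, LinearMap.rTensor_id, LinearMap.id_apply]
    have hsurj : Function.Surjective (LinearMap.rTensor M (e : R →ₗ[R] (R ∙ p))) :=
      fun t => ⟨LinearMap.rTensor M (e.symm : (R ∙ p) →ₗ[R] R) t, hre t⟩
    have hcomp : (Submodule.span R {p}).subtype ∘ₗ (e : R →ₗ[R] (R ∙ p)) =
        LinearMap.toSpanSingleton R R p := by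
      ext
      simp only [LinearMap.coe_comp, Function.comp_apply, LinearEquiv.coe_coe,
        Submodule.subtype_apply, he, LinearEquiv.toSpanNonzeroSingleton_apply,
        LinearMap.toSpanSingleton_apply, one_smul]
    have key : Function.Injective
        (LinearMap.rTensor M ((Submodule.span R {p}).subtype ∘ₗ (e : R →ₗ[R] (R ∙ p)))) := by
      rw [hcomp]
      have heq : (TensorProduct.lid R M).toLinearMap ∘ₗ
          LinearMap.rTensor M (LinearMap.toSpanSingleton R R p) =
          (DistribMulAction.toLinearMap R M p) ∘ₗ (TensorProduct.lid R M).toLinearMap := by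
        apply TensorProduct.ext'
        intro r m
        simp [LinearMap.toSpanSingleton, smul_smul, mul_comm]
        rw [show (DistribMulAction.toLinearMap R M p) m = p • m from rfl, smul_smul, mul_comm]
      have hinj : Function.Injective (DistribMulAction.toLinearMap R M p) := by
        intro m m' hmm
        have hz : p • (m - m') = 0 := by
          change p • m = p • m' at hmm
          rw [smul_sub, hmm, sub_self]
        rcases hM p (m - m') hz with h | h
        · exact absurd h hp0
        · exact sub_eq_zero.mp h
      have hci : Function.Injective ((TensorProduct.lid R M).toLinearMap ∘ₗ
          LinearMap.rTensor M (LinearMap.toSpanSingleton R R p)) := by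
        rw [heq]
        simp only [LinearMap.coe_comp, LinearEquiv.coe_coe]
        exact hinj.comp (TensorProduct.lid R M).injective
      simp only [LinearMap.coe_comp, LinearEquiv.coe_coe] at hci
      exact Function.Injective.of_comp hci
    rw [LinearMap.rTensor_comp] at key
    intro a b hab
    obtain ⟨a', rfl⟩ := hsurj a
    obtain ⟨b', rfl⟩ := hsurj b
    have := key (by simpa using hab)
    rw [this]
lemma tpI_eq : threePlanesIdeal k = tpI k := rfl

/-- `A = k[s,x,y,z]/(y(x−s), xz, yz)` has no `s`-torsion:
`s·φ ∈ (y(x−s), xz, yz)` implies `φ ∈ (y(x−s), xz, yz)`.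
Consequently `A` is flat over `k[s]` (acting via `s ↦` the class of `s`). -/
theorem stmt_13 :
    (∀ φ : MvPolynomial (Fin 4) k,
      X 0 * φ ∈ threePlanesIdeal k → φ ∈ threePlanesIdeal k) ∧
    (letI : Algebra (Polynomial k) (threePlanesRing k) :=
        ((Polynomial.aeval
          (Ideal.Quotient.mk (threePlanesIdeal k) (X 0))).toRingHom).toAlgebra
     Module.Flat (Polynomial k) (threePlanesRing k)) := by
  constructor
  · intro φ h
    rw [tpI_eq] at h ⊢
    exact tpI_regular k Polynomial.X Polynomial.X_ne_zero φ (by simpa using h)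
  · letI : Algebra (Polynomial k) (threePlanesRing k) :=
        ((Polynomial.aeval
          (Ideal.Quotient.mk (threePlanesIdeal k) (X 0))).toRingHom).toAlgebra
    apply flat_of_torsionfree
    intro p m hpm
    by_cases hp : p = 0
    · exact Or.inl hp
    · right
      obtain ⟨φ, rfl⟩ := Ideal.Quotient.mk_surjective m
      rw [Algebra.smul_def] at hpm
      have halg : (algebraMap (Polynomial k) (threePlanesRing k)) p
          = Ideal.Quotient.mk (threePlanesIdeal k)
            (Polynomial.aeval (X 0 : MvPolynomial (Fin 4) k) p) := by
        rw [RingHom.algebraMap_toAlgebra]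
        have := Polynomial.aeval_algHom_apply
          (Ideal.Quotient.mkₐ k (threePlanesIdeal k)) (X 0 : MvPolynomial (Fin 4) k) p
        simpa [Ideal.Quotient.mkₐ_eq_mk] using this
      rw [halg, ← map_mul, Ideal.Quotient.eq_zero_iff_mem] at hpm
      rw [Ideal.Quotient.eq_zero_iff_mem, tpI_eq]
      exact tpI_regular k p hp φ (by rwa [tpI_eq] at hpm)

end
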